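/- Let {X,U,V,Y} be a basis of ℝ^4 and let c ∈ ℝ. Let g be the symmetric bilinear form with g(X,X) = c, g(X,Y) = 1, g(U,V) = 1, all other products 0. Let R be the 4-linear form whose only nonzero components on the basis, up to the symmetries R(x_1,x_2,x_3,x_4) = −R(x_2,x_1,x_3,x_4) = −R(x_1,x_2,x_4,x_3) = R(x_3,x_4,x_1,x_2), are R(X,U,U,X) = 1. Then: (i) g is nondegenerate of signature (2,2); (ii) the Jacobi operator satisfies J(ξ)² = 0 for every ξ ∈ ℝ^4; (iii) there exists ξ_0 with J(ξ_0) ≠ 0. -/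

import Mathlib

private def gtab (c : ℝ) : Fin 4 → Fin 4 → ℝ := fun i j =>
  if i = 0 ∧ j = 0 then c
  else if (i = 0 ∧ j = 3) ∨ (i = 3 ∧ j = 0) ∨ (i = 1 ∧ j = 2) ∨ (i = 2 ∧ j = 1) then 1
  else 0

private def qtab : Fin 4 → Fin 4 → ℝ := fun i j =>
  if i = 0 ∧ j = 1 then 1 else if i = 1 ∧ j = 0 then -1 else 0

private def sigma22 : Fin 4 ≃ (Fin 2 ⊕ Fin 2) where
  toFun := ![Sum.inl 0, Sum.inl 1, Sum.inr 0, Sum.inr 1]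
  invFun := Sum.elim ![0, 1] ![2, 3]
  left_inv := by decide
  right_inv := by decide

private lemma sig1 : sigma22.symm (Sum.inl 0) = 0 := rfl
private lemma sig2 : sigma22.symm (Sum.inl 1) = 1 := rfl
private lemma sig3 : sigma22.symm (Sum.inr 0) = 2 := rfl
private lemma sig4 : sigma22.symm (Sum.inr 1) = 3 := rfl

private lemma vec_upd_0 {W : Type*} (a b' c' d x : W) :
    Function.update ![a, b', c', d] 0 x = ![x, b', c', d] := by
  funext i; fin_cases i <;> simp

private lemma vec_upd_1 {W : Type*} (a b' c' d x : W) :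
    Function.update ![a, b', c', d] 1 x = ![a, x, c', d] := by
  funext i; fin_cases i <;> simp

private lemma vec_upd_2 {W : Type*} (a b' c' d x : W) :
    Function.update ![a, b', c', d] 2 x = ![a, b', x, d] := by
  funext i; fin_cases i <;> simp

private lemma slot0_sum {W : Type*} [AddCommGroup W] [Module ℝ W]
    (f : MultilinearMap ℝ (fun _ : Fin 4 => W) ℝ) (y z w' : W)
    (t : Fin 4 → ℝ) (u : Fin 4 → W) :
    f ![∑ k, t k • u k, y, z, w'] = ∑ k, t k • f ![u k, y, z, w'] := by
  rw [show ![∑ k, t k • u k, y, z, w']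
      = Function.update ![0, y, z, w'] 0 (∑ k, t k • u k) from (vec_upd_0 _ _ _ _ _).symm,
    f.map_update_sum]
  exact Finset.sum_congr rfl fun k _ => by rw [f.map_update_smul, vec_upd_0]

private lemma slot1_sum {W : Type*} [AddCommGroup W] [Module ℝ W]
    (f : MultilinearMap ℝ (fun _ : Fin 4 => W) ℝ) (a z w' : W)
    (t : Fin 4 → ℝ) (u : Fin 4 → W) :
    f ![a, ∑ k, t k • u k, z, w'] = ∑ k, t k • f ![a, u k, z, w'] := by
  rw [show ![a, ∑ k, t k • u k, z, w']
      = Function.update ![a, 0, z, w'] 1 (∑ k, t k • u k) from (vec_upd_1 _ _ _ _ _).symm,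
    f.map_update_sum]
  exact Finset.sum_congr rfl fun k _ => by rw [f.map_update_smul, vec_upd_1]

private lemma slot2_sum {W : Type*} [AddCommGroup W] [Module ℝ W]
    (f : MultilinearMap ℝ (fun _ : Fin 4 => W) ℝ) (a y w' : W)
    (t : Fin 4 → ℝ) (u : Fin 4 → W) :
    f ![a, y, ∑ k, t k • u k, w'] = ∑ k, t k • f ![a, y, u k, w'] := by
  rw [show ![a, y, ∑ k, t k • u k, w']
      = Function.update ![a, y, 0, w'] 2 (∑ k, t k • u k) from (vec_upd_2 _ _ _ _ _).symm,
    f.map_update_sum]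
  exact Finset.sum_congr rfl fun k _ => by rw [f.map_update_smul, vec_upd_2]

set_option maxHeartbeats 2000000 in
/-- for the inner product with `g(X,X) = c`, `g(X,Y) = g(U,V) = 1` on `ℝ⁴`
(basis `X = b 0`, `U = b 1`, `V = b 2`, `Y = b 3`) and the 4-linear form with
`R(X,U,U,X) = 1` as its only nonzero component up to the usual symmetries, `g` has
signature `(2,2)` and the Jacobi operator `J(ξ)`, defined by `g(J(ξ)y,z) = R(y,ξ,ξ,z)`,
satisfies `J(ξ)² = 0` for all `ξ` and `J(ξ₀) ≠ 0` for some `ξ₀`. -/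
theorem osserman_nilpotent_order_two_R4
    (b : Module.Basis (Fin 4) ℝ (Fin 4 → ℝ)) (c : ℝ)
    (g : (Fin 4 → ℝ) →ₗ[ℝ] (Fin 4 → ℝ) →ₗ[ℝ] ℝ)
    (hgsym : ∀ v w, g v w = g w v)
    (hgXX : g (b 0) (b 0) = c)
    (hgXY : g (b 0) (b 3) = 1)
    (hgUV : g (b 1) (b 2) = 1)
    (hg0 : ∀ i j : Fin 4,
      ¬((i = 0 ∧ j = 0) ∨ (i = 0 ∧ j = 3) ∨ (i = 3 ∧ j = 0) ∨
        (i = 1 ∧ j = 2) ∨ (i = 2 ∧ j = 1)) →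
      g (b i) (b j) = 0)
    (R : MultilinearMap ℝ (fun _ : Fin 4 => (Fin 4 → ℝ)) ℝ)
    (hsym1 : ∀ x₁ x₂ x₃ x₄, R ![x₁, x₂, x₃, x₄] = -R ![x₂, x₁, x₃, x₄])
    (hsym2 : ∀ x₁ x₂ x₃ x₄, R ![x₁, x₂, x₃, x₄] = -R ![x₁, x₂, x₄, x₃])
    (hsym3 : ∀ x₁ x₂ x₃ x₄, R ![x₁, x₂, x₃, x₄] = R ![x₃, x₄, x₁, x₂])
    (hval : R ![b 0, b 1, b 1, b 0] = 1)
    (hvanish : ∀ i₁ i₂ i₃ i₄ : Fin 4,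
      ¬(((i₁ = 0 ∧ i₂ = 1) ∨ (i₁ = 1 ∧ i₂ = 0)) ∧
        ((i₃ = 1 ∧ i₄ = 0) ∨ (i₃ = 0 ∧ i₄ = 1))) →
      R ![b i₁, b i₂, b i₃, b i₄] = 0) :
    (∃ e : Module.Basis (Fin 2 ⊕ Fin 2) ℝ (Fin 4 → ℝ), ∀ i j,
      g (e i) (e j) =
        if i = j then Sum.elim (fun _ => (1 : ℝ)) (fun _ => (-1 : ℝ)) i else 0) ∧
    (∀ v, (∀ w, g v w = 0) → v = 0) ∧
    (∀ J : (Fin 4 → ℝ) → Module.End ℝ (Fin 4 → ℝ),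
      (∀ ξ y z, g (J ξ y) z = R ![y, ξ, ξ, z]) →
      (∀ ξ, J ξ ^ 2 = 0) ∧ ∃ ξ₀, J ξ₀ ≠ 0) := by
  -- the table of values of `g` on the basis
  have htab : ∀ i j, g (b i) (b j) = gtab c i j := by
    intro i j
    fin_cases i <;> fin_cases j <;>
      norm_num [gtab] <;>
      first
        | exact hgXX | exact hgXY | exact hgUV
        | (rw [hgsym]; assumption)
        | exact hg0 _ _ (by decide)
  -- vanishing of all pairings against basis vectors forces a vector to vanish
  have hzero : ∀ v, (∀ j : Fin 4, g v (b j) = 0) → v = 0 := by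
    intro v hv
    have hrep : ∀ j, g v (b j) = ∑ i, b.repr v i * g (b i) (b j) := by
      intro j
      conv_lhs => rw [← b.sum_repr v]
      simp only [map_sum, LinearMap.sum_apply, map_smul, LinearMap.smul_apply, smul_eq_mul]
    have h0 : b.repr v 0 = 0 := by
      have := hv 3; rw [hrep, Fin.sum_univ_four] at this
      simp +decide [htab, gtab] at this; exact this
    have h1 : b.repr v 1 = 0 := by
      have := hv 2; rw [hrep, Fin.sum_univ_four] at this
      simp +decide [htab, gtab] at this; exact this
    have h2 : b.repr v 2 = 0 := by
      have := hv 1; rw [hrep, Fin.sum_univ_four] at this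
      simp +decide [htab, gtab] at this; exact this
    have h3 : b.repr v 3 = 0 := by
      have := hv 0; rw [hrep, Fin.sum_univ_four] at this
      simp +decide [htab, gtab, h0] at this; linarith
    have := b.sum_repr v
    rw [Fin.sum_univ_four, h0, h1, h2, h3] at this
    simpa using this.symm
  refine ⟨?_, fun v hv => hzero v (fun j => hv (b j)), ?_⟩
  · -- the signature (2,2) orthonormal basis
    set A : Matrix (Fin 4) (Fin 4) ℝ :=
      Matrix.of ![![1,0,1,0], ![0,1,0,1], ![0,1/2,0,-1/2], ![(1-c)/2, 0, -(1+c)/2, 0]] with hA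
    have hdet : A.det = -1 := by
      have h : ((2 : Fin 4).succAbove 2) = 3 := by decide
      simp [hA, Matrix.det_succ_row_zero, Fin.sum_univ_succ, h]
      ring
    have hunit : IsUnit A.det := by rw [hdet]; exact isUnit_one.neg
    refine ⟨(b.map (Matrix.toLinearEquiv b A hunit)).reindex sigma22, ?_⟩
    have key : ∀ i : Fin 2 ⊕ Fin 2,
        ((b.map (Matrix.toLinearEquiv b A hunit)).reindex sigma22) i
          = ∑ j, A j (sigma22.symm i) • b j := by
      intro i
      rw [Module.Basis.reindex_apply, Module.Basis.map_apply, Matrix.toLinearEquiv_apply,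
        Matrix.toLin_self]
    intro i j
    rw [key, key]
    rcases i with i | i <;> rcases j with j | j <;> fin_cases i <;> fin_cases j <;>
      simp only [Fin.zero_eta, Fin.mk_one, Fin.isValue, sig1, sig2, sig3, sig4] <;>
      simp only [Fin.sum_univ_four] <;>
      simp [hA, map_add, map_smul, LinearMap.add_apply,
        LinearMap.smul_apply, htab, gtab, smul_eq_mul] <;> ring
  · -- the Jacobi operator
    intro J hJg
    have hv2 : R ![b 1, b 0, b 1, b 0] = -1 := by rw [hsym1, hval]
    have hv3 : R ![b 0, b 1, b 0, b 1] = -1 := by rw [hsym2, hval]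
    have hv4 : R ![b 1, b 0, b 0, b 1] = 1 := by rw [hsym1, hv3]; norm_num
    have hq0 : ∀ i j, ¬((i = 0 ∧ j = 1) ∨ (i = 1 ∧ j = 0)) → qtab i j = 0 := by
      intro i j h
      rw [qtab, if_neg (by tauto), if_neg (by tauto)]
    -- the table of values of `R` on the basis
    have hRtab : ∀ i j k l, R ![b i, b j, b k, b l] = qtab i j * qtab l k := by
      intro i j k l
      by_cases h : ((i = 0 ∧ j = 1) ∨ (i = 1 ∧ j = 0)) ∧
          ((k = 1 ∧ l = 0) ∨ (k = 0 ∧ l = 1))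
      · obtain ⟨h1, h2⟩ := h
        rcases h1 with ⟨hi, hj⟩ | ⟨hi, hj⟩ <;> rcases h2 with ⟨hk, hl⟩ | ⟨hk, hl⟩ <;>
          subst hi <;> subst hj <;> subst hk <;> subst hl <;>
          simp +decide [qtab, hval, hv2, hv3, hv4]
      · rw [hvanish _ _ _ _ h]
        rcases not_and_or.mp h with h' | h'
        · rw [hq0 _ _ h', zero_mul]
        · rw [hq0 l k (by tauto), mul_zero]
    -- the coefficient function
    set P : (Fin 4 → ℝ) → Fin 4 → ℝ :=
      fun ξ i => if i = 0 then b.repr ξ 1 else if i = 1 then -(b.repr ξ 0) else 0 with hP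
    have hPsum : ∀ ξ i, (∑ k, b.repr ξ k * qtab i k) = P ξ i := by
      intro ξ i
      fin_cases i <;> simp +decide [Fin.sum_univ_four, qtab, hP]
    have hRval : ∀ ξ i j, R ![b i, ξ, ξ, b j] = P ξ i * P ξ j := by
      intro ξ i j
      conv_lhs => rw [← b.sum_repr ξ]
      rw [slot1_sum]
      rw [show (∑ k, b.repr ξ k • R ![b i, b k, ∑ l, b.repr ξ l • b l, b j])
          = ∑ k, ∑ l, (b.repr ξ k * qtab i k) * (b.repr ξ l * qtab j l) from ?_]
      · rw [← Finset.sum_mul_sum, hPsum, hPsum]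
      · refine Finset.sum_congr rfl fun k _ => ?_
        rw [slot2_sum, Finset.smul_sum]
        refine Finset.sum_congr rfl fun l _ => ?_
        rw [hRtab, smul_eq_mul, smul_eq_mul]
        ring
    -- the common image vector of the Jacobi operator
    set w : (Fin 4 → ℝ) → (Fin 4 → ℝ) :=
      fun ξ => b.repr ξ 1 • b 3 - b.repr ξ 0 • b 2 with hw
    have hgw : ∀ ξ j, g (w ξ) (b j) = P ξ j := by
      intro ξ j
      fin_cases j <;>
        simp +decide [hw, hP, map_sub, map_smul, LinearMap.sub_apply, LinearMap.smul_apply,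
          htab, gtab, smul_eq_mul]
    have hgJ : ∀ ξ v j, g (J ξ v) (b j)
        = (b.repr v 0 * b.repr ξ 1 - b.repr v 1 * b.repr ξ 0) * P ξ j := by
      intro ξ v j
      rw [hJg ξ v (b j)]
      conv_lhs => rw [← b.sum_repr v]
      rw [slot0_sum, Fin.sum_univ_four]
      simp only [hRval, hP, smul_eq_mul]
      fin_cases j <;> simp +decide <;> ring
    -- the explicit form of the Jacobi operator
    have hJf : ∀ ξ v, J ξ v
        = (b.repr v 0 * b.repr ξ 1 - b.repr v 1 * b.repr ξ 0) • w ξ := by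
      intro ξ v
      have := hzero (J ξ v - (b.repr v 0 * b.repr ξ 1 - b.repr v 1 * b.repr ξ 0) • w ξ)
        (fun j => by
          rw [map_sub, LinearMap.sub_apply, map_smul, LinearMap.smul_apply,
            hgJ, hgw, smul_eq_mul, sub_self])
      exact sub_eq_zero.mp this
    have hwrep0 : ∀ ξ, b.repr (w ξ) 0 = 0 := by
      intro ξ; simp [hw, map_sub, map_smul, Module.Basis.repr_self, Finsupp.single_apply]
    have hwrep1 : ∀ ξ, b.repr (w ξ) 1 = 0 := by
      intro ξ; simp [hw, map_sub, map_smul, Module.Basis.repr_self, Finsupp.single_apply]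
    constructor
    · intro ξ
      apply LinearMap.ext
      intro v
      rw [pow_two, Module.End.mul_apply, hJf ξ v, map_smul, hJf ξ (w ξ),
        hwrep0, hwrep1]
      simp
    · refine ⟨b 1, fun h => ?_⟩
      have hb : J (b 1) (b 0) = b 3 := by
        rw [hJf, hw]
        simp [Module.Basis.repr_self, Finsupp.single_apply]
      rw [h] at hb
      exact b.ne_zero 3 (by simpa using hb.symm)
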